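/- For real y, z with 0 ≤ y < 1, 0 ≤ z < 1: ∏_{(m,n): 1 ≤ m ≤ n, gcd(m,n)=1} (1/(1 - y^m z^n))^{m/n^2} = (1 - yz)^{y/(1-y)} · exp{ (y/(1-y)^2) · (Li₂(z) - Li₂(yz)) }, where Li₂(w) = ∑_{k=1}^∞ w^k/k². Equivalently in logarithmic form: ∑_{1≤m≤n, gcd(m,n)=1} (m/n²)·log(1/(1-y^m z^n)) = (y/(1-y))·log(1-yz) + (y/(1-y)²)·(Li₂(z) - Li₂(yz)). -/

import Mathlib

/-- The dilogarithm `Li₂(w) = ∑_{k≥1} w^k / k²`. -/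
noncomputable def Li2 (w : ℝ) : ℝ := ∑' k : ℕ+, w ^ (k : ℕ) / (k : ℝ) ^ 2

open Real

/-- log series over ℕ+. -/
lemma hasSum_log_pnat {x : ℝ} (h0 : 0 ≤ x) (h1 : x < 1) :
    HasSum (fun j : ℕ+ => x ^ (j : ℕ) / (j : ℝ)) (-Real.log (1 - x)) := by
  have h := hasSum_pow_div_log_of_abs_lt_one (x := x) (by rwa [abs_of_nonneg h0])
  refine (Equiv.pnatEquivNat.symm.hasSum_iff).mp ?_
  have : ((fun j : ℕ+ => x ^ (j : ℕ) / (j : ℝ)) ∘ Equiv.pnatEquivNat.symm) =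
      fun n : ℕ => x ^ (n + 1) / ((n : ℝ) + 1) := by
    funext n
    simp [Function.comp, Nat.succPNat]
  rw [this]
  exact h

lemma summable_pnat_of_le {f g : ℕ+ → ℝ} (hg : Summable g) (h0 : ∀ k, 0 ≤ f k)
    (hle : ∀ k, f k ≤ g k) : Summable f :=
  Summable.of_nonneg_of_le h0 hle hg

lemma summable_geom_pnat {w : ℝ} (h0 : 0 ≤ w) (h1 : w < 1) :
    Summable (fun k : ℕ+ => w ^ (k : ℕ)) :=
  (summable_geometric_of_lt_one h0 h1).comp_injective PNat.coe_injective

lemma one_le_sq_pnat (k : ℕ+) : (1 : ℝ) ≤ (k : ℝ) ^ 2 := by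
  have : (1 : ℝ) ≤ (k : ℝ) := by exact_mod_cast k.one_le
  nlinarith

lemma hasSum_Li2 {w : ℝ} (h0 : 0 ≤ w) (h1 : w < 1) :
    HasSum (fun k : ℕ+ => w ^ (k : ℕ) / (k : ℝ) ^ 2) (Li2 w) := by
  have hs : Summable (fun k : ℕ+ => w ^ (k : ℕ) / (k : ℝ) ^ 2) := by
    refine summable_pnat_of_le (summable_geom_pnat h0 h1) (fun k => by positivity) (fun k => ?_)
    exact div_le_self (by positivity) (one_le_sq_pnat k)
  exact hs.hasSum

lemma sum_euler (y : ℝ) (n : ℕ) :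
    (1 - y) ^ 2 * ∑ i ∈ Finset.range n, ((i : ℝ) + 1) * y ^ (i + 1) =
      y - ((n : ℝ) + 1) * y ^ (n + 1) + (n : ℝ) * y ^ (n + 2) := by
  induction n with
  | zero => simp
  | succ n ih =>
    rw [Finset.sum_range_succ, mul_add, ih]
    push_cast
    ring
abbrev CP := {p : ℕ+ × ℕ+ // p.1 ≤ p.2 ∧ Nat.gcd (p.1 : ℕ) (p.2 : ℕ) = 1}
abbrev LE2 := {p : ℕ+ × ℕ+ // p.1 ≤ p.2}

def phi : CP × ℕ+ → LE2 := fun x =>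
  ⟨(x.2 * x.1.val.1, x.2 * x.1.val.2), mul_le_mul_right x.1.prop.1 _⟩

lemma phi_bij : Function.Bijective phi := by
  constructor
  · rintro ⟨⟨⟨m, n⟩, hmn, hco⟩, j⟩ ⟨⟨⟨m', n'⟩, hmn', hco'⟩, j'⟩ h
    simp only [phi, Subtype.mk.injEq, Prod.mk.injEq] at h
    obtain ⟨h1, h2⟩ := h
    have h1' : (j : ℕ) * (m : ℕ) = (j' : ℕ) * (m' : ℕ) := by exact_mod_cast congrArg (PNat.val) h1
    have h2' : (j : ℕ) * (n : ℕ) = (j' : ℕ) * (n' : ℕ) := by exact_mod_cast congrArg (PNat.val) h2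
    have hj : (j : ℕ) = (j' : ℕ) := by
      have e1 : Nat.gcd ((j : ℕ) * m) ((j : ℕ) * n) = (j : ℕ) := by
        rw [Nat.gcd_mul_left, hco, mul_one]
      have e2 : Nat.gcd ((j' : ℕ) * m') ((j' : ℕ) * n') = (j' : ℕ) := by
        rw [Nat.gcd_mul_left, hco', mul_one]
      rw [← e1, h1', h2', e2]
    have hjj : j = j' := PNat.coe_injective hj
    subst hjj
    have hm : m = m' := PNat.coe_injective (Nat.eq_of_mul_eq_mul_left j.pos h1')
    have hn : n = n' := PNat.coe_injective (Nat.eq_of_mul_eq_mul_left j.pos h2')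
    simp [hm, hn]
  · rintro ⟨⟨M, N⟩, hMN⟩
    set g : ℕ := Nat.gcd (M : ℕ) (N : ℕ) with hg
    have hgpos : 0 < g := Nat.gcd_pos_of_pos_left _ M.pos
    have hdM : g ∣ (M : ℕ) := Nat.gcd_dvd_left _ _
    have hdN : g ∣ (N : ℕ) := Nat.gcd_dvd_right _ _
    have hmpos : 0 < (M : ℕ) / g := Nat.div_pos (Nat.le_of_dvd M.pos hdM) hgpos
    have hnpos : 0 < (N : ℕ) / g := Nat.div_pos (Nat.le_of_dvd N.pos hdN) hgpos
    refine ⟨⟨⟨⟨(⟨(M : ℕ) / g, hmpos⟩ : ℕ+), (⟨(N : ℕ) / g, hnpos⟩ : ℕ+)⟩, ?_, ?_⟩, (⟨g, hgpos⟩ : ℕ+)⟩, ?_⟩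
    · exact Nat.div_le_div_right (by exact_mod_cast hMN)
    · exact Nat.coprime_div_gcd_div_gcd hgpos
    · apply Subtype.ext
      apply Prod.ext <;> apply PNat.coe_injective <;>
        simp [phi, Nat.mul_div_cancel', hdM, hdN]
      · exact PNat.eq (Nat.mul_div_cancel' hdM)
      · exact PNat.eq (Nat.mul_div_cancel' hdN)

noncomputable def phiEquiv : CP × ℕ+ ≃ LE2 := Equiv.ofBijective phi phi_bij

lemma key_term (y z : ℝ) (m n j : ℕ+) :
    (((j * m : ℕ+) : ℝ) / ((j * n : ℕ+) : ℝ) ^ 2) *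
      (y ^ ((j * m : ℕ+) : ℕ) * z ^ ((j * n : ℕ+) : ℕ)) =
    ((m : ℝ) / (n : ℝ) ^ 2) * ((y ^ (m : ℕ) * z ^ (n : ℕ)) ^ (j : ℕ) / (j : ℝ)) := by
  have hj : ((j : ℕ) : ℝ) ≠ 0 := by exact_mod_cast j.pos.ne'
  have hn : ((n : ℕ) : ℝ) ≠ 0 := by exact_mod_cast n.pos.ne'
  rw [PNat.mul_coe, PNat.mul_coe]
  push_cast
  rw [pow_mul', pow_mul', mul_pow]
  field_simp
  ring


set_option maxHeartbeats 1000000 in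
theorem stmt_17 (y z : ℝ) (hy0 : 0 ≤ y) (hy1 : y < 1) (hz0 : 0 ≤ z) (hz1 : z < 1) :
    (∏' p : {p : ℕ+ × ℕ+ // p.1 ≤ p.2 ∧ Nat.gcd (p.1 : ℕ) (p.2 : ℕ) = 1},
        (1 / (1 - y ^ (p.val.1 : ℕ) * z ^ (p.val.2 : ℕ))) ^
          ((p.val.1 : ℝ) / (p.val.2 : ℝ) ^ 2) =
      (1 - y * z) ^ (y / (1 - y)) *
        Real.exp (y / (1 - y) ^ 2 * (Li2 z - Li2 (y * z)))) ∧
    (∑' p : {p : ℕ+ × ℕ+ // p.1 ≤ p.2 ∧ Nat.gcd (p.1 : ℕ) (p.2 : ℕ) = 1},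
        ((p.val.1 : ℝ) / (p.val.2 : ℝ) ^ 2) *
          Real.log (1 / (1 - y ^ (p.val.1 : ℕ) * z ^ (p.val.2 : ℕ))) =
      y / (1 - y) * Real.log (1 - y * z) + y / (1 - y) ^ 2 * (Li2 z - Li2 (y * z))) := by
  have h1y : (0:ℝ) < 1 - y := by linarith
  have h1yne : (1:ℝ) - y ≠ 0 := h1y.ne'
  have hyz0 : 0 ≤ y * z := mul_nonneg hy0 hz0
  have hyz1 : y * z < 1 := lt_of_le_of_lt (mul_le_of_le_one_left hz0 hy1.le) hz1
  have hx0 : ∀ m n : ℕ+, 0 ≤ y ^ (m:ℕ) * z ^ (n:ℕ) := fun m n => by positivity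
  have hx1 : ∀ m n : ℕ+, y ^ (m:ℕ) * z ^ (n:ℕ) < 1 := by
    intro m n
    have h1 : y ^ (m:ℕ) ≤ 1 := pow_le_one₀ hy0 hy1.le
    have h2 : z ^ (n:ℕ) < 1 := pow_lt_one₀ hz0 hz1 n.pos.ne'
    calc y ^ (m:ℕ) * z ^ (n:ℕ) ≤ 1 * z ^ (n:ℕ) :=
          mul_le_mul_of_nonneg_right h1 (by positivity)
      _ = z ^ (n:ℕ) := one_mul _
      _ < 1 := h2
  set V : ℝ := y / (1 - y) * Real.log (1 - y * z) + y / (1 - y) ^ 2 * (Li2 z - Li2 (y * z))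
    with hV
  set F : ℕ+ × ℕ+ → ℝ :=
    fun p => ((p.1 : ℝ) / (p.2 : ℝ) ^ 2) * (y ^ (p.1 : ℕ) * z ^ (p.2 : ℕ)) with hF
  set swapInd : ℕ+ × ℕ+ → ℝ := fun p =>
    if p.2 ≤ p.1 then ((p.2 : ℝ) / (p.1 : ℝ) ^ 2) * (y ^ (p.2 : ℕ) * z ^ (p.1 : ℕ)) else 0
    with hSI
  -- summability of swapInd
  have hMy : Summable (fun k : ℕ+ => (k : ℝ) * y ^ (k : ℕ)) := by
    have h := summable_pow_mul_geometric_of_norm_lt_one (R := ℝ) 1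
      (by rwa [Real.norm_eq_abs, abs_of_nonneg hy0])
    simpa [Function.comp_def] using h.comp_injective PNat.coe_injective
  have hgz : Summable (fun k : ℕ+ => z ^ (k : ℕ)) := summable_geom_pnat hz0 hz1
  have hprod : Summable (fun p : ℕ+ × ℕ+ => z ^ (p.1 : ℕ) * ((p.2 : ℝ) * y ^ (p.2 : ℕ))) :=
    hgz.mul_of_nonneg hMy (fun k => by positivity) (fun k => by positivity)
  have hsw : Summable swapInd := by
    refine hprod.of_nonneg_of_le (fun p => ?_) (fun p => ?_)
    · rw [hSI]; dsimp only; split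
      · positivity
      · exact le_rfl
    · obtain ⟨N, M⟩ := p
      rw [hSI]; dsimp only
      split
      · have h1 : (M : ℝ) / (N : ℝ) ^ 2 ≤ (M : ℝ) :=
          div_le_self (by positivity) (one_le_sq_pnat N)
        calc ((M : ℝ) / (N : ℝ) ^ 2) * (y ^ (M:ℕ) * z ^ (N:ℕ))
            ≤ (M : ℝ) * (y ^ (M:ℕ) * z ^ (N:ℕ)) :=
              mul_le_mul_of_nonneg_right h1 (by positivity)
          _ = z ^ (N:ℕ) * ((M : ℝ) * y ^ (M:ℕ)) := by ring
      · positivity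
  -- fiberwise sums in M
  set G : ℕ+ → ℝ := fun N =>
    (y - ((N : ℝ) + 1) * y ^ ((N:ℕ) + 1) + (N : ℝ) * y ^ ((N:ℕ) + 2)) / (1 - y) ^ 2 *
      (z ^ (N:ℕ) / (N : ℝ) ^ 2) with hG
  have hfib : ∀ N : ℕ+, HasSum (fun M : ℕ+ => swapInd (N, M)) (G N) := by
    intro N
    refine (Equiv.pnatEquivNat.symm.hasSum_iff).mp ?_
    have hcomp : ((fun M : ℕ+ => swapInd (N, M)) ∘ Equiv.pnatEquivNat.symm) =
        fun i : ℕ => if i + 1 ≤ (N : ℕ) then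
          (((i : ℝ) + 1) / (N : ℝ) ^ 2) * (y ^ (i + 1) * z ^ (N:ℕ)) else 0 := by
      funext i
      have hco : ((Equiv.pnatEquivNat.symm i : ℕ+) : ℕ) = i + 1 := rfl
      have hcond : (Equiv.pnatEquivNat.symm i : ℕ+) ≤ N ↔ i + 1 ≤ (N : ℕ) := by
        rw [← PNat.coe_le_coe, hco]
      simp only [Function.comp, hSI]
      by_cases h : i + 1 ≤ (N : ℕ)
      · rw [if_pos (hcond.mpr h), if_pos h, hco]
        push_cast [hco]
        ring
      · rw [if_neg (fun hh => h (hcond.mp hh)), if_neg h]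
    rw [hcomp]
    have hfin : ∀ i ∉ Finset.range (N : ℕ),
        (if i + 1 ≤ (N : ℕ) then
          (((i : ℝ) + 1) / (N : ℝ) ^ 2) * (y ^ (i + 1) * z ^ (N:ℕ)) else 0) = 0 := by
      intro i hi
      rw [Finset.mem_range, not_lt] at hi
      rw [if_neg (by omega)]
    have hs := hasSum_sum_of_ne_finset_zero (L := SummationFilter.unconditional ℕ) hfin
    have hval : ∑ i ∈ Finset.range (N : ℕ),
        (if i + 1 ≤ (N : ℕ) then
          (((i : ℝ) + 1) / (N : ℝ) ^ 2) * (y ^ (i + 1) * z ^ (N:ℕ)) else 0) = G N := by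
      rw [Finset.sum_congr rfl (fun i hi => if_pos (by
        rw [Finset.mem_range] at hi; omega))]
      have : ∑ i ∈ Finset.range (N : ℕ),
          (((i : ℝ) + 1) / (N : ℝ) ^ 2) * (y ^ (i + 1) * z ^ (N:ℕ)) =
          (z ^ (N:ℕ) / (N : ℝ) ^ 2) * ∑ i ∈ Finset.range (N : ℕ), ((i : ℝ) + 1) * y ^ (i + 1) := by
        rw [Finset.mul_sum]
        exact Finset.sum_congr rfl fun i _ => by ring
      rw [this]
      have heuler : ∑ i ∈ Finset.range (N : ℕ), ((i : ℝ) + 1) * y ^ (i + 1) =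
          (y - ((N:ℕ) + 1 : ℝ) * y ^ ((N:ℕ) + 1) + ((N:ℕ) : ℝ) * y ^ ((N:ℕ) + 2)) / (1 - y) ^ 2 := by
        rw [eq_div_iff (pow_ne_zero 2 h1yne), mul_comm, sum_euler]
      rw [heuler, hG]
      push_cast
      ring
    rw [← hval]
    exact hs
  -- evaluate the sum of G
  have hA := hasSum_Li2 hz0 hz1
  have hB := hasSum_Li2 hyz0 hyz1
  have hL := hasSum_log_pnat hyz0 hyz1
  have combo := ((hA.sub hB).mul_left (y / (1 - y) ^ 2)).sub
    (hL.mul_left ((y - y ^ 2) / (1 - y) ^ 2))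
  have hGfun : (fun N : ℕ+ => y / (1 - y) ^ 2 *
        (z ^ (N:ℕ) / (N : ℝ) ^ 2 - (y * z) ^ (N:ℕ) / (N : ℝ) ^ 2) -
      (y - y ^ 2) / (1 - y) ^ 2 * ((y * z) ^ (N:ℕ) / (N : ℝ))) = G := by
    funext N
    have hn : ((N : ℕ) : ℝ) ≠ 0 := by exact_mod_cast N.pos.ne'
    have e1 : y ^ ((N:ℕ)+1) = y ^ (N:ℕ) * y := pow_succ y (N:ℕ)
    have e2 : y ^ ((N:ℕ)+2) = y ^ (N:ℕ) * y * y := by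
      rw [show (N:ℕ)+2 = ((N:ℕ)+1)+1 from rfl, pow_succ, e1]
    rw [hG]
    dsimp only
    rw [mul_pow, e1, e2]
    generalize z ^ (N:ℕ) = a
    generalize y ^ (N:ℕ) = b
    field_simp
    ring
  have hGval : y / (1 - y) ^ 2 * (Li2 z - Li2 (y * z)) -
      (y - y ^ 2) / (1 - y) ^ 2 * (-Real.log (1 - y * z)) = V := by
    rw [hV]
    field_simp
    ring
  have hGsum : HasSum G V := by rw [← hGfun, ← hGval]; exact combo
  -- total sum of swapInd
  have hswV : HasSum swapInd V := by
    obtain ⟨a, ha⟩ := hsw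
    have h2 := ha.prod_fiberwise hfib
    rwa [← hGsum.unique h2] at ha
  -- to subtype over pairs M ≤ N
  have hQ : HasSum (fun q : {p : ℕ+ × ℕ+ // p.1 ≤ p.2} => F q.val) V := by
    have hswap : HasSum (swapInd ∘ (Equiv.prodComm ℕ+ ℕ+)) V :=
      ((Equiv.prodComm ℕ+ ℕ+).hasSum_iff).mpr hswV
    have heq : (swapInd ∘ (Equiv.prodComm ℕ+ ℕ+)) =
        Set.indicator {p : ℕ+ × ℕ+ | p.1 ≤ p.2} F := by
      funext p
      simp only [Function.comp, Equiv.prodComm_apply, hSI, hF, Set.indicator_apply,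
        Set.mem_setOf_eq, Prod.fst_swap, Prod.snd_swap]
    rw [heq] at hswap
    exact hasSum_subtype_iff_indicator.mpr hswap
  -- transfer to (coprime pair, multiplier)
  have hPJ : HasSum ((fun q : {p : ℕ+ × ℕ+ // p.1 ≤ p.2} => F q.val) ∘ phiEquiv) V :=
    phiEquiv.hasSum_iff.mpr hQ
  have hkey : ((fun q : {p : ℕ+ × ℕ+ // p.1 ≤ p.2} => F q.val) ∘ phiEquiv) =
      fun x : CP × ℕ+ => ((x.1.val.1 : ℝ) / (x.1.val.2 : ℝ) ^ 2) *
        ((y ^ (x.1.val.1 : ℕ) * z ^ (x.1.val.2 : ℕ)) ^ (x.2 : ℕ) / (x.2 : ℝ)) := by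
    funext x
    exact key_term y z x.1.val.1 x.1.val.2 x.2
  rw [hkey] at hPJ
  -- fiberwise in the multiplier
  set f : CP → ℝ := fun p => ((p.val.1 : ℝ) / (p.val.2 : ℝ) ^ 2) *
      Real.log (1 / (1 - y ^ (p.val.1 : ℕ) * z ^ (p.val.2 : ℕ))) with hf
  have hfib2 : ∀ p : CP, HasSum (fun j : ℕ+ =>
      ((p.val.1 : ℝ) / (p.val.2 : ℝ) ^ 2) *
        ((y ^ (p.val.1 : ℕ) * z ^ (p.val.2 : ℕ)) ^ (j : ℕ) / (j : ℝ))) (f p) := by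
    intro p
    have h := (hasSum_log_pnat (hx0 p.val.1 p.val.2) (hx1 p.val.1 p.val.2)).mul_left
      ((p.val.1 : ℝ) / (p.val.2 : ℝ) ^ 2)
    have hlog : Real.log (1 / (1 - y ^ (p.val.1 : ℕ) * z ^ (p.val.2 : ℕ))) =
        -Real.log (1 - y ^ (p.val.1 : ℕ) * z ^ (p.val.2 : ℕ)) := by
      rw [one_div, Real.log_inv]
    rw [hf]
    dsimp only
    rw [hlog]
    exact h
  have hfsum : HasSum f V := hPJ.prod_fiberwise hfib2
  constructor
  · -- the product form
    have hprd := hfsum.rexp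
    have hfac : (Real.exp ∘ f) = fun p : CP =>
        (1 / (1 - y ^ (p.val.1 : ℕ) * z ^ (p.val.2 : ℕ))) ^
          ((p.val.1 : ℝ) / (p.val.2 : ℝ) ^ 2) := by
      funext p
      have hb : 0 < 1 / (1 - y ^ (p.val.1 : ℕ) * z ^ (p.val.2 : ℕ)) := by
        have h := hx1 p.val.1 p.val.2
        have : 0 < 1 - y ^ ((p.val.1 : ℕ+) : ℕ) * z ^ ((p.val.2 : ℕ+) : ℕ) := by linarith
        positivity
      rw [Function.comp, Real.rpow_def_of_pos hb, hf]
      dsimp only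
      rw [mul_comm]
    rw [hfac] at hprd
    rw [hprd.tprod_eq, hV, Real.exp_add, Real.rpow_def_of_pos (by linarith : (0:ℝ) < 1 - y * z),
      mul_comm (Real.log (1 - y * z))]
  · exact hfsum.tsum_eq
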